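/- Let p, q, r be pmfs on a finite nonempty set 𝒳 with q(x) > 0 for all x ∈ 𝒳. Then D(p‖q) ≤ log₂(1/μ_q) · √(2 ln 2) · [ √(min(D(p‖r), D(r‖p))) + √(min(D(q‖r), D(r‖q))) ], where μ_q = min_{x∈𝒳} q(x) and each minimum is interpreted in [0, +∞] (the inequality being trivially true if the right-hand side is +∞). (Appendix Lemma 8 of the paper.) -/

import Mathlib

open scoped ENNReal BigOperators

attribute [local instance] Classical.propDecidable

/-- Kullback–Leibler divergence (base 2) between two pmfs on a finite set,
valued in `[0, +∞]`. -/
noncomputable def klDiv {α : Type*} [Fintype α] (p q : α → ℝ) : ℝ≥0∞ :=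
  if ∀ x, q x = 0 → p x = 0 then
    ENNReal.ofReal (∑ x, p x * Real.logb 2 (p x / q x))
  else ⊤

/-- A probability mass function on a finite set. -/
def IsPMF {α : Type*} [Fintype α] (p : α → ℝ) : Prop :=
  (∀ x, 0 ≤ p x) ∧ ∑ x, p x = 1

/-- Appendix Lemma 8: triangle-like inequality
`D(p‖q) ≤ log₂(1/μ_q) · √(2 ln 2) · [√(min(D(p‖r),D(r‖p))) + √(min(D(q‖r),D(r‖q)))]`,
where the minima are taken in `[0, +∞]` (the inequality is trivially true
when the right-hand side is `+∞`). -/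
private lemma mono_from_deriv (f f' : ℝ → ℝ)
    (hd : ∀ x : ℝ, 1 ≤ x → HasDerivAt f (f' x) x)
    (h0 : ∀ x : ℝ, 1 ≤ x → 0 ≤ f' x) {t : ℝ} (ht : 1 ≤ t) : f 1 ≤ f t := by
  have hmono : MonotoneOn f (Set.Ici (1:ℝ)) := by
    apply monotoneOn_of_deriv_nonneg (convex_Ici 1)
    · intro x hx; exact (hd x hx).continuousAt.continuousWithinAt
    · intro x hx
      rw [interior_Ici] at hx
      exact ((hd x hx.le).differentiableAt).differentiableWithinAt
    · intro x hx
      rw [interior_Ici] at hx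
      rw [(hd x hx.le).deriv]
      exact h0 x hx.le
  exact hmono (by simp) (by simpa using ht) ht

private lemma logL1 {t : ℝ} (ht : 1 ≤ t) :
    3*(t^2-1) ≤ Real.log t * (t^2+4*t+1) := by
  have hden : ∀ u : ℝ, 1 ≤ u → (0:ℝ) < u^2+4*u+1 := fun u hu => by nlinarith
  have key : Real.log 1 - 3*(1^2-1)/(1^2+4*1+1) ≤
      Real.log t - 3*(t^2-1)/(t^2+4*t+1) := by
    apply mono_from_deriv (fun u => Real.log u - 3*(u^2-1)/(u^2+4*u+1))
      (fun u => u⁻¹ - (6*u*(u^2+4*u+1) - 3*(u^2-1)*(2*u+4))/(u^2+4*u+1)^2)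
    · intro u hu
      have hu0 : (0:ℝ) < u := by linarith
      have h1 : HasDerivAt (fun u : ℝ => 3*(u^2-1)) (6*u) u := by
        have := ((hasDerivAt_pow 2 u).sub_const 1).const_mul (3:ℝ)
        refine this.congr_deriv ?_
        try simp only [id_eq]
        push_cast; ring
      have h2 : HasDerivAt (fun u : ℝ => u^2+4*u+1) (2*u+4) u := by
        have := ((hasDerivAt_pow 2 u).add ((hasDerivAt_id u).const_mul 4)).add_const 1
        refine this.congr_deriv ?_
        try simp only [id_eq]
        push_cast; ring
      exact (Real.hasDerivAt_log hu0.ne').sub (h1.div h2 (hden u hu).ne')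
    · intro u hu
      have hu0 : (0:ℝ) < u := by linarith
      have hden' := hden u hu
      rw [sub_nonneg, inv_eq_one_div, div_le_div_iff₀ (by positivity) hu0]
      nlinarith [pow_nonneg (sub_nonneg.2 hu) 4, sq_nonneg ((u-1)^2)]
    · exact ht
  have hden' := hden t ht
  simp only [Real.log_one] at key
  norm_num at key
  rw [div_le_iff₀ hden'] at key
  linarith

private lemma logL2 {t : ℝ} (ht : 1 ≤ t) :
    Real.log t * (2*(2*t+1)) ≤ (t-1)*(t+5) := by
  have hden : ∀ u : ℝ, 1 ≤ u → (0:ℝ) < 2*(2*u+1) := fun u hu => by nlinarith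
  have key : (1-1)*(1+5)/(2*(2*1+1)) - Real.log 1 ≤
      (t-1)*(t+5)/(2*(2*t+1)) - Real.log t := by
    apply mono_from_deriv (fun u => (u-1)*(u+5)/(2*(2*u+1)) - Real.log u)
      (fun u => ((2*u+4)*(2*(2*u+1)) - (u-1)*(u+5)*4)/(2*(2*u+1))^2 - u⁻¹)
    · intro u hu
      have hu0 : (0:ℝ) < u := by linarith
      have h1 : HasDerivAt (fun u : ℝ => (u-1)*(u+5)) (2*u+4) u := by
        have := ((hasDerivAt_id u).sub_const 1).mul ((hasDerivAt_id u).add_const 5)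
        refine this.congr_deriv ?_
        try simp only [id_eq]
        ring
      have h2 : HasDerivAt (fun u : ℝ => 2*(2*u+1)) 4 u := by
        have := (((hasDerivAt_id u).const_mul 2).add_const 1).const_mul (2:ℝ)
        refine this.congr_deriv ?_ <;> ring
      exact (h1.div h2 (hden u hu).ne').sub (Real.hasDerivAt_log hu0.ne')
    · intro u hu
      have hu0 : (0:ℝ) < u := by linarith
      have hden' := hden u hu
      rw [sub_nonneg, inv_eq_one_div, div_le_div_iff₀ hu0 (by positivity)]
      nlinarith [pow_nonneg (sub_nonneg.2 hu) 3]
    · exact ht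
  have hden' := hden t ht
  simp only [Real.log_one] at key
  norm_num at key
  rw [le_div_iff₀ hden'] at key
  linarith

private lemma gkey {t : ℝ} (ht : 0 < t) :
    3*(t-1)^2 ≤ 2*(t+2)*(t*Real.log t - t + 1) := by
  rcases le_total 1 t with h1 | h1
  · have := logL1 h1
    nlinarith [sq_nonneg ((t-1)^2), sq_nonneg (t-1)]
  · -- 0 < t ≤ 1 : use logL2 at 1/t
    have hinv : 1 ≤ 1/t := by rw [le_div_iff₀ ht]; linarith
    have h2 := logL2 hinv
    have hlog : Real.log (1/t) = - Real.log t := by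
      rw [one_div, Real.log_inv]
    rw [hlog] at h2
    -- h2 : -log t * (2*(2*(1/t)+1)) ≤ (1/t-1)*((1/t)+5)
    have ht2 : t^2 > 0 := by positivity
    have h3 : (t-1)*(1+5*t) ≤ Real.log t * (2*t*(t+2)) := by
      have := mul_le_mul_of_nonneg_left h2 ht2.le
      have e1 : t^2 * (-Real.log t * (2*(2*(1/t)+1))) = -Real.log t * (2*t*(2+t)) := by
        field_simp
      have e2 : t^2 * ((1/t-1)*((1/t)+5)) = (1-t)*(1+5*t) := by
        field_simp
      rw [e1, e2] at this
      nlinarith [this]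
    nlinarith [h3]

private lemma P1 {x y : ℝ} (hx : 0 ≤ x) (hy : 0 ≤ y) (h : y = 0 → x = 0) :
    3*(x-y)^2/(2*(x+2*y)) ≤ x * Real.log (x/y) - x + y := by
  rcases eq_or_lt_of_le hy with hy0 | hy0
  · have hx0 := h hy0.symm
    simp [← hy0, hx0]
  rcases eq_or_lt_of_le hx with hx0 | hx0
  · simp only [← hx0]
    rw [zero_div, Real.log_zero]
    have : 3*(0-y)^2/(2*(0+2*y)) = 3*y/4 := by field_simp; ring
    rw [this]; linarith
  · have key := gkey (t := x/y) (by positivity)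
    have hxy : (0:ℝ) < x + 2*y := by linarith
    rw [div_le_iff₀ (by positivity)]
    have hk := mul_le_mul_of_nonneg_left key (sq_nonneg y)
    have e1 : y^2 * (3*(x/y-1)^2) = 3*(x-y)^2 := by field_simp
    have e2 : y^2 * (2*(x/y+2)*(x/y*Real.log (x/y) - x/y + 1))
        = 2*(x+2*y)*(x*Real.log (x/y) - x + y) := by field_simp
    rw [e1, e2] at hk
    linarith

private lemma pinsker_real {α : Type*} [Fintype α] (a b : α → ℝ)
    (ha : IsPMF a) (hb : IsPMF b) (hc : ∀ x, b x = 0 → a x = 0) :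
    (∑ x, |a x - b x|)^2 ≤ 2 * ∑ x, a x * Real.log (a x / b x) := by
  have hc3 : ∀ x : α, (0:ℝ) ≤ a x + 2 * b x := fun x => by
    have := ha.1 x; have := hb.1 x; linarith
  have CS := Finset.sum_mul_sq_le_sq_mul_sq Finset.univ
    (fun x => |a x - b x| / Real.sqrt (a x + 2*b x))
    (fun x => Real.sqrt (a x + 2*b x))
  have e1 : ∀ x : α, |a x - b x| / Real.sqrt (a x + 2*b x) * Real.sqrt (a x + 2*b x)
      = |a x - b x| := by
    intro x
    rcases eq_or_lt_of_le (hc3 x) with h0 | h0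
    · have hb0 : b x = 0 := by have := ha.1 x; have := hb.1 x; linarith
      have ha0 : a x = 0 := hc x hb0
      simp [ha0, hb0]
    · rw [div_mul_cancel₀]
      exact Real.sqrt_ne_zero'.mpr h0
  have e2 : ∀ x : α, (|a x - b x| / Real.sqrt (a x + 2*b x))^2
      = (a x - b x)^2 / (a x + 2*b x) := by
    intro x
    rw [div_pow, sq_abs, Real.sq_sqrt (hc3 x)]
  have e3 : ∀ x : α, (Real.sqrt (a x + 2*b x))^2 = a x + 2*b x := fun x =>
    Real.sq_sqrt (hc3 x)
  simp only [e1, e2, e3] at CS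
  have sum3 : ∑ x, (a x + 2*b x) = 3 := by
    rw [Finset.sum_add_distrib, ← Finset.mul_sum, ha.2, hb.2]; norm_num
  rw [sum3] at CS
  -- termwise bound
  have tw : ∀ x : α, (a x - b x)^2 / (a x + 2*b x)
      ≤ (2/3) * (a x * Real.log (a x / b x) - a x + b x) := by
    intro x
    have := P1 (ha.1 x) (hb.1 x) (hc x)
    rcases eq_or_lt_of_le (hc3 x) with h0 | h0
    · have hb0 : b x = 0 := by have := ha.1 x; have := hb.1 x; linarith
      have ha0 : a x = 0 := hc x hb0
      simp [ha0, hb0]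
    · rw [div_le_iff₀ h0]
      rw [div_le_iff₀ (by positivity : (0:ℝ) < 2*(a x + 2*b x))] at this
      nlinarith [this]
  have sum_tw := Finset.sum_le_sum (s := Finset.univ) (fun x _ => tw x)
  have expand : ∑ x, (2/3) * (a x * Real.log (a x / b x) - a x + b x)
      = (2/3) * (∑ x, a x * Real.log (a x / b x)) := by
    rw [← Finset.mul_sum]
    congr 1
    rw [Finset.sum_add_distrib, Finset.sum_sub_distrib, ha.2, hb.2]
    ring
  rw [expand] at sum_tw
  linarith [CS, sum_tw]

private lemma chord {t M : ℝ} (h1 : 1 ≤ t) (htM : t ≤ M) (hM : 2 ≤ M) :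
    t * Real.log t ≤ 2*(t-1)*Real.log M := by
  have hM1 : (1:ℝ) < M := by linarith
  have hM0 : M - 1 ≠ 0 := by linarith
  have hMne : M ≠ 0 := by linarith
  have hb : 0 ≤ (t-1)/(M-1) := by
    apply div_nonneg <;> linarith
  have ha : 0 ≤ (M-t)/(M-1) := by
    apply div_nonneg <;> linarith
  have hab : (M-t)/(M-1) + (t-1)/(M-1) = 1 := by
    field_simp
    ring
  have hcvx := Real.convexOn_mul_log.2 (Set.mem_Ici.2 (by norm_num : (0:ℝ) ≤ 1))
    (Set.mem_Ici.2 (by linarith : (0:ℝ) ≤ M)) ha hb hab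
  simp only [smul_eq_mul] at hcvx
  beta_reduce at hcvx
  have hpt : (M-t)/(M-1) * 1 + (t-1)/(M-1) * M = t := by
    field_simp
    ring
  rw [hpt] at hcvx
  rw [Real.log_one] at hcvx
  -- hcvx : t * log t ≤ a * (1 * 0) + b * (M * log M)
  have hlogM : 0 ≤ Real.log M := Real.log_nonneg (by linarith)
  have hcvx2 : t * Real.log t ≤ (t-1)/(M-1) * (M * Real.log M) := by
    calc t * Real.log t ≤ (M-t)/(M-1) * (1 * 0) + (t-1)/(M-1) * (M * Real.log M) := hcvx
      _ = (t-1)/(M-1) * (M * Real.log M) := by ring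
  calc t * Real.log t ≤ (t-1)/(M-1) * (M * Real.log M) := hcvx2
    _ ≤ 2*(t-1)*Real.log M := by
        rw [div_mul_eq_mul_div, div_le_iff₀ (by linarith : (0:ℝ) < M - 1)]
        nlinarith [mul_nonneg (sub_nonneg.2 h1) hlogM]

private lemma term_bound {p q μ : ℝ} (hq : μ ≤ q) (hqp : q ≤ p) (hp1 : p ≤ 1)
    (hμ : 0 < μ) (h2 : 2*μ ≤ 1) :
    p * Real.log (p / q) ≤ 2*(p - q) * Real.log μ⁻¹ := by
  have hq0 : 0 < q := lt_of_lt_of_le hμ hq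
  set t := p / q with htdef
  have h1t : 1 ≤ t := (one_le_div hq0).2 hqp
  have htM : t ≤ μ⁻¹ := by
    have : p / q ≤ 1 / μ := div_le_div₀ zero_le_one hp1 hμ hq
    simpa [one_div] using this
  have hM : 2 ≤ μ⁻¹ := by
    rw [le_inv_comm₀ (by norm_num) hμ]
    linarith
  have hc := chord h1t htM hM
  have hpt : p = t * q := by rw [htdef, div_mul_cancel₀ p hq0.ne']
  calc p * Real.log t = q * (t * Real.log t) := by rw [hpt]; ring
    _ ≤ q * (2*(t-1)*Real.log μ⁻¹) := mul_le_mul_of_nonneg_left hc hq0.le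
    _ = 2*(p-q)*Real.log μ⁻¹ := by rw [hpt]; ring

private lemma revPinsker {𝒳 : Type*} [Fintype 𝒳] (p q : 𝒳 → ℝ)
    (hp : IsPMF p) (hq : IsPMF q) {μ : ℝ} (hμ : 0 < μ) (hμq : ∀ x, μ ≤ q x)
    (h2 : 2*μ ≤ 1) :
    ∑ x, p x * Real.logb 2 (p x / q x) ≤
      Real.logb 2 μ⁻¹ * ∑ x, |p x - q x| := by
  have hlog2 : (0:ℝ) < Real.log 2 := Real.log_pos one_lt_two
  have hq0 : ∀ x, 0 < q x := fun x => lt_of_lt_of_le hμ (hμq x)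
  have hp1 : ∀ x, p x ≤ 1 := by
    intro x
    rw [← hp.2]
    exact Finset.single_le_sum (fun i _ => hp.1 i) (Finset.mem_univ x)
  -- split by the set A = {x | q x ≤ p x}
  have split := (Finset.sum_filter_add_sum_filter_not Finset.univ
    (fun x => q x ≤ p x) (fun x => p x * Real.logb 2 (p x / q x))).symm
  have hnonpos : ∑ x ∈ Finset.univ.filter (fun x => ¬ q x ≤ p x),
      p x * Real.logb 2 (p x / q x) ≤ 0 := by
    apply Finset.sum_nonpos
    intro x hx
    simp only [Finset.mem_filter] at hx
    apply mul_nonpos_of_nonneg_of_nonpos (hp.1 x)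
    apply Real.logb_nonpos one_lt_two
      (div_nonneg (hp.1 x) (hq0 x).le)
    rw [div_le_one (hq0 x)]
    linarith [hx.2]
  have hA : ∑ x ∈ Finset.univ.filter (fun x => q x ≤ p x),
      p x * Real.logb 2 (p x / q x) ≤
      ∑ x ∈ Finset.univ.filter (fun x => q x ≤ p x),
        2*(p x - q x) * Real.logb 2 μ⁻¹ := by
    apply Finset.sum_le_sum
    intro x hx
    simp only [Finset.mem_filter] at hx
    have hterm := term_bound (hμq x) hx.2 (hp1 x) hμ h2
    simp only [Real.logb]
    calc p x * (Real.log (p x / q x) / Real.log 2)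
        = (p x * Real.log (p x / q x)) / Real.log 2 := by ring
      _ ≤ (2*(p x - q x) * Real.log μ⁻¹) / Real.log 2 :=
          (div_le_div_iff_of_pos_right hlog2).2 hterm
      _ = 2*(p x - q x) * (Real.log μ⁻¹ / Real.log 2) := by ring
  -- identify the right-hand side
  have hzero : ∑ x, (p x - q x) = 0 := by
    rw [Finset.sum_sub_distrib, hp.2, hq.2]; ring
  have hsplit0 := Finset.sum_filter_add_sum_filter_not Finset.univ
    (fun x => q x ≤ p x) (fun x => p x - q x)
  have hsplitabs := Finset.sum_filter_add_sum_filter_not Finset.univ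
    (fun x => q x ≤ p x) (fun x => |p x - q x|)
  have habs1 : ∑ x ∈ Finset.univ.filter (fun x => q x ≤ p x), |p x - q x|
      = ∑ x ∈ Finset.univ.filter (fun x => q x ≤ p x), (p x - q x) := by
    apply Finset.sum_congr rfl
    intro x hx
    simp only [Finset.mem_filter] at hx
    exact abs_of_nonneg (by linarith [hx.2])
  have habs2 : ∑ x ∈ Finset.univ.filter (fun x => ¬ q x ≤ p x), |p x - q x|
      = - ∑ x ∈ Finset.univ.filter (fun x => ¬ q x ≤ p x), (p x - q x) := by
    rw [← Finset.sum_neg_distrib]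
    apply Finset.sum_congr rfl
    intro x hx
    simp only [Finset.mem_filter] at hx
    rw [abs_of_nonpos (by push_neg at hx; linarith [hx.2])]
  have hkey : 2 * ∑ x ∈ Finset.univ.filter (fun x => q x ≤ p x), (p x - q x)
      = ∑ x, |p x - q x| := by
    rw [hzero] at hsplit0
    rw [← hsplitabs, habs1, habs2]
    linarith
  have hRHS : ∑ x ∈ Finset.univ.filter (fun x => q x ≤ p x),
      2*(p x - q x) * Real.logb 2 μ⁻¹
      = Real.logb 2 μ⁻¹ * ∑ x, |p x - q x| := by
    rw [← hkey]
    rw [← Finset.sum_mul, ← Finset.mul_sum]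
    ring
  calc ∑ x, p x * Real.logb 2 (p x / q x)
      = (∑ x ∈ Finset.univ.filter (fun x => q x ≤ p x),
          p x * Real.logb 2 (p x / q x))
        + ∑ x ∈ Finset.univ.filter (fun x => ¬ q x ≤ p x),
          p x * Real.logb 2 (p x / q x) := split
    _ ≤ (∑ x ∈ Finset.univ.filter (fun x => q x ≤ p x),
          p x * Real.logb 2 (p x / q x)) + 0 := by linarith [hnonpos]
    _ ≤ (∑ x ∈ Finset.univ.filter (fun x => q x ≤ p x),
          2*(p x - q x) * Real.logb 2 μ⁻¹) := by linarith [hA]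
    _ = Real.logb 2 μ⁻¹ * ∑ x, |p x - q x| := hRHS

private lemma pinsker_ennreal {α : Type*} [Fintype α] (a b : α → ℝ)
    (ha : IsPMF a) (hb : IsPMF b) :
    ENNReal.ofReal (∑ x, |a x - b x|) ≤
      ENNReal.ofReal (Real.sqrt (2*Real.log 2)) * (klDiv a b)^(1/2 : ℝ) := by
  have hlog2 : (0:ℝ) < Real.log 2 := Real.log_pos one_lt_two
  by_cases hc : ∀ x, b x = 0 → a x = 0
  · have hS : klDiv a b = ENNReal.ofReal (∑ x, a x * Real.logb 2 (a x / b x)) :=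
      if_pos hc
    set Sb := ∑ x, a x * Real.logb 2 (a x / b x) with hSbdef
    have hconv : ∑ x, a x * Real.log (a x / b x) = Real.log 2 * Sb := by
      rw [hSbdef, Finset.mul_sum]
      apply Finset.sum_congr rfl
      intro x _
      rw [Real.logb]
      field_simp
    have hreal := pinsker_real a b ha hb hc
    rw [hconv] at hreal
    have hd0 : 0 ≤ ∑ x, |a x - b x| := Finset.sum_nonneg (fun x _ => abs_nonneg _)
    have hSb0 : 0 ≤ Sb := by nlinarith [sq_nonneg (∑ x, |a x - b x|)]
    have hsqrt : ∑ x, |a x - b x| ≤ Real.sqrt (2*Real.log 2) * Real.sqrt Sb := by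
      rw [← Real.sqrt_mul (by positivity)]
      apply Real.le_sqrt_of_sq_le
      nlinarith [hreal]
    calc ENNReal.ofReal (∑ x, |a x - b x|)
        ≤ ENNReal.ofReal (Real.sqrt (2*Real.log 2) * Real.sqrt Sb) :=
          ENNReal.ofReal_le_ofReal hsqrt
      _ = ENNReal.ofReal (Real.sqrt (2*Real.log 2)) * ENNReal.ofReal (Real.sqrt Sb) :=
          ENNReal.ofReal_mul (Real.sqrt_nonneg _)
      _ = ENNReal.ofReal (Real.sqrt (2*Real.log 2)) * (klDiv a b)^(1/2 : ℝ) := by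
          rw [hS, ENNReal.ofReal_rpow_of_nonneg hSb0 (by norm_num : (0:ℝ) ≤ 1/2)]
          rw [← Real.sqrt_eq_rpow]
  · have hT : klDiv a b = ⊤ := if_neg hc
    rw [hT, ENNReal.top_rpow_of_pos (by norm_num : (0:ℝ) < 1/2), ENNReal.mul_top]
    · exact le_top
    · simp only [ne_eq, ENNReal.ofReal_eq_zero, not_le]
      positivity

theorem kl_triangle_like {𝒳 : Type*} [Fintype 𝒳] [Nonempty 𝒳]
    (p q r : 𝒳 → ℝ) (hp : IsPMF p) (hq : IsPMF q) (hr : IsPMF r)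
    (hqpos : ∀ x, 0 < q x) :
    klDiv p q ≤
      ENNReal.ofReal
          (Real.logb 2 ((Finset.univ.inf' Finset.univ_nonempty q)⁻¹) *
            Real.sqrt (2 * Real.log 2)) *
        ((min (klDiv p r) (klDiv r p)) ^ (1 / 2 : ℝ) +
          (min (klDiv q r) (klDiv r q)) ^ (1 / 2 : ℝ)) := by
  set μ : ℝ := Finset.univ.inf' Finset.univ_nonempty q with hμdef
  have hμq : ∀ x, μ ≤ q x := fun x => Finset.inf'_le _ (Finset.mem_univ x)
  have hμ0 : 0 < μ := by
    obtain ⟨x₀, -, hx₀⟩ := Finset.exists_mem_eq_inf' Finset.univ_nonempty q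
    rw [hμdef, hx₀]
    exact hqpos x₀
  have hcond : ∀ x, q x = 0 → p x = 0 := fun x h => absurd h (hqpos x).ne'
  have hkl : klDiv p q = ENNReal.ofReal (∑ x, p x * Real.logb 2 (p x / q x)) :=
    if_pos hcond
  by_cases h2 : 2*μ ≤ 1
  · -- main case
    have hrev := revPinsker p q hp hq hμ0 hμq h2
    have hlam : 0 ≤ Real.logb 2 μ⁻¹ := by
      apply Real.logb_nonneg one_lt_two
      rw [le_inv_comm₀ one_pos hμ0]
      norm_num
      linarith
    have hd : ∀ (a b : 𝒳 → ℝ), 0 ≤ ∑ x, |a x - b x| :=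
      fun a b => Finset.sum_nonneg (fun x _ => abs_nonneg _)
    have hdtri : ∑ x, |p x - q x| ≤ (∑ x, |p x - r x|) + ∑ x, |q x - r x| := by
      rw [← Finset.sum_add_distrib]
      apply Finset.sum_le_sum
      intro x _
      calc |p x - q x| ≤ |p x - r x| + |r x - q x| := abs_sub_le _ _ _
        _ = |p x - r x| + |q x - r x| := by rw [abs_sub_comm (r x)]
    set c : ℝ≥0∞ := ENNReal.ofReal (Real.sqrt (2*Real.log 2)) with hcdef
    have hm1 : ENNReal.ofReal (∑ x, |p x - r x|) ≤
        c * (min (klDiv p r) (klDiv r p))^(1/2 : ℝ) := by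
      rcases le_total (klDiv p r) (klDiv r p) with h | h
      · rw [min_eq_left h]; exact pinsker_ennreal p r hp hr
      · rw [min_eq_right h]
        have := pinsker_ennreal r p hr hp
        rwa [show (∑ x, |r x - p x|) = ∑ x, |p x - r x| from
          Finset.sum_congr rfl (fun x _ => abs_sub_comm _ _)] at this
    have hm2 : ENNReal.ofReal (∑ x, |q x - r x|) ≤
        c * (min (klDiv q r) (klDiv r q))^(1/2 : ℝ) := by
      rcases le_total (klDiv q r) (klDiv r q) with h | h
      · rw [min_eq_left h]; exact pinsker_ennreal q r hq hr
      · rw [min_eq_right h]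
        have := pinsker_ennreal r q hr hq
        rwa [show (∑ x, |r x - q x|) = ∑ x, |q x - r x| from
          Finset.sum_congr rfl (fun x _ => abs_sub_comm _ _)] at this
    calc klDiv p q = ENNReal.ofReal (∑ x, p x * Real.logb 2 (p x / q x)) := hkl
      _ ≤ ENNReal.ofReal (Real.logb 2 μ⁻¹ * ∑ x, |p x - q x|) :=
          ENNReal.ofReal_le_ofReal hrev
      _ = ENNReal.ofReal (Real.logb 2 μ⁻¹) * ENNReal.ofReal (∑ x, |p x - q x|) :=
          ENNReal.ofReal_mul hlam
      _ ≤ ENNReal.ofReal (Real.logb 2 μ⁻¹) *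
            (ENNReal.ofReal (∑ x, |p x - r x|) + ENNReal.ofReal (∑ x, |q x - r x|)) := by
          apply mul_le_mul_right
          rw [← ENNReal.ofReal_add (hd p r) (hd q r)]
          exact ENNReal.ofReal_le_ofReal hdtri
      _ ≤ ENNReal.ofReal (Real.logb 2 μ⁻¹) *
            (c * (min (klDiv p r) (klDiv r p))^(1/2 : ℝ) +
             c * (min (klDiv q r) (klDiv r q))^(1/2 : ℝ)) :=
          mul_le_mul_right (add_le_add hm1 hm2) _
      _ = ENNReal.ofReal (Real.logb 2 μ⁻¹ * Real.sqrt (2 * Real.log 2)) *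
            ((min (klDiv p r) (klDiv r p)) ^ (1 / 2 : ℝ) +
             (min (klDiv q r) (klDiv r q)) ^ (1 / 2 : ℝ)) := by
          rw [ENNReal.ofReal_mul hlam, hcdef]
          ring
  · -- degenerate case : 𝒳 has a single element and p = q
    push_neg at h2
    have hq2 : ∀ x, 1/2 < q x := fun x => lt_of_lt_of_le (by linarith) (hμq x)
    have hpq : ∀ x, p x = q x := by
      intro x
      have huniv : (Finset.univ : Finset 𝒳) = {x} := by
        apply Finset.eq_singleton_iff_unique_mem.mpr
        refine ⟨Finset.mem_univ x, ?_⟩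
        intro y _
        by_contra hyx
        have hsub : ({y, x} : Finset 𝒳) ⊆ Finset.univ := Finset.subset_univ _
        have hsum : q y + q x ≤ ∑ z, q z := by
          rw [← Finset.sum_pair hyx]
          exact Finset.sum_le_sum_of_subset_of_nonneg hsub
            (fun i _ _ => (hqpos i).le)
        rw [hq.2] at hsum
        have := hq2 x; have := hq2 y
        linarith
      have hps : p x = 1 := by rw [← hp.2, huniv, Finset.sum_singleton]
      have hqs : q x = 1 := by rw [← hq.2, huniv, Finset.sum_singleton]
      rw [hps, hqs]
    have hzero : klDiv p q = 0 := by
      rw [hkl]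
      have : ∀ x : 𝒳, p x * Real.logb 2 (p x / q x) = 0 := by
        intro x
        rw [hpq x, div_self (hqpos x).ne', Real.logb_one, mul_zero]
      rw [Finset.sum_congr rfl (fun x _ => this x)]
      simp
    rw [hzero]
    exact zero_le
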